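/- Let I, m, a be real numbers with I > 0, m > 0. Suppose θ, x, y : ℝ → ℝ are twice differentiable and λ : ℝ → ℝ satisfies the Chaplygin sleigh Lagrange–d'Alembert equations Iθ̈ = λa, mẍ = λ sin θ, mÿ = −λ cos θ, together with the constraint aθ̇ + sin θ ẋ − cos θ ẏ = 0 for all t. Define the nonholonomic momenta p₁ := (I + a²m)θ̇ and p₂ := m(cos θ ẋ + sin θ ẏ). Then for all t, ṗ₁ = −(a/(I + a²m)) p₁ p₂ and ṗ₂ = (ma/(I + a²m)²) p₁². -/

import Mathlib

open Real

/-- For solutions of the Chaplygin sleigh Lagrange–d'Alembert equations with the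
nonholonomic constraint, the momenta `p₁ = (I + a²m)θ̇` and
`p₂ = m(cos θ ẋ + sin θ ẏ)` satisfy `ṗ₁ = −(a/(I+a²m)) p₁ p₂` and
`ṗ₂ = (ma/(I+a²m)²) p₁²`. -/
theorem chaplygin_sleigh_momentum_equations (I m a : ℝ) (hI : 0 < I) (hm : 0 < m)
    (θ x y lam : ℝ → ℝ)
    (hθ : Differentiable ℝ θ) (hθ' : Differentiable ℝ (deriv θ))
    (hx : Differentiable ℝ x) (hx' : Differentiable ℝ (deriv x))
    (hy : Differentiable ℝ y) (hy' : Differentiable ℝ (deriv y))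
    (heqθ : ∀ t, I * deriv (deriv θ) t = lam t * a)
    (heqx : ∀ t, m * deriv (deriv x) t = lam t * sin (θ t))
    (heqy : ∀ t, m * deriv (deriv y) t = -(lam t * cos (θ t)))
    (hcon : ∀ t, a * deriv θ t + sin (θ t) * deriv x t - cos (θ t) * deriv y t = 0)
    (p₁ p₂ : ℝ → ℝ)
    (hp₁ : ∀ t, p₁ t = (I + a ^ 2 * m) * deriv θ t)
    (hp₂ : ∀ t, p₂ t = m * (cos (θ t) * deriv x t + sin (θ t) * deriv y t)) :
    ∀ t, deriv p₁ t = -(a / (I + a ^ 2 * m)) * p₁ t * p₂ t ∧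
      deriv p₂ t = (m * a / (I + a ^ 2 * m) ^ 2) * p₁ t ^ 2 := by
  intro t
  have hIam : (0:ℝ) < I + a ^ 2 * m := by positivity
  have hθt : HasDerivAt θ (deriv θ t) t := (hθ t).hasDerivAt
  have hθ't : HasDerivAt (deriv θ) (deriv (deriv θ) t) t := (hθ' t).hasDerivAt
  have hx't : HasDerivAt (deriv x) (deriv (deriv x) t) t := (hx' t).hasDerivAt
  have hy't : HasDerivAt (deriv y) (deriv (deriv y) t) t := (hy' t).hasDerivAt
  -- derivative of p₁
  have hp1d : deriv p₁ t = (I + a ^ 2 * m) * deriv (deriv θ) t := by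
    have : p₁ = fun s => (I + a ^ 2 * m) * deriv θ s := funext hp₁
    rw [this]
    exact (hθ't.const_mul _).deriv
  -- derivative of p₂
  have hp2d : deriv p₂ t =
      m * ((-sin (θ t) * deriv θ t) * deriv x t + cos (θ t) * deriv (deriv x) t
        + ((cos (θ t) * deriv θ t) * deriv y t + sin (θ t) * deriv (deriv y) t)) := by
    have : p₂ = fun s => m * (cos (θ s) * deriv x s + sin (θ s) * deriv y s) :=
      funext hp₂
    rw [this]
    exact (((hθt.cos.mul hx't).add (hθt.sin.mul hy't)).const_mul m).deriv
  -- derivative of the constraint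
  have hcond : a * deriv (deriv θ) t
      + ((cos (θ t) * deriv θ t) * deriv x t + sin (θ t) * deriv (deriv x) t)
      - ((-sin (θ t) * deriv θ t) * deriv y t + cos (θ t) * deriv (deriv y) t) = 0 := by
    have hD : HasDerivAt
        (fun s => a * deriv θ s + sin (θ s) * deriv x s - cos (θ s) * deriv y s)
        (a * deriv (deriv θ) t
          + ((cos (θ t) * deriv θ t) * deriv x t + sin (θ t) * deriv (deriv x) t)
          - ((-sin (θ t) * deriv θ t) * deriv y t + cos (θ t) * deriv (deriv y) t)) t :=
      ((hθ't.const_mul a).add (hθt.sin.mul hx't)).sub (hθt.cos.mul hy't)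
    have h0 : (fun s => a * deriv θ s + sin (θ s) * deriv x s - cos (θ s) * deriv y s)
        = fun _ => (0:ℝ) := funext hcon
    have := hD.deriv
    rw [h0, deriv_const] at this
    linarith [this]
  -- abbreviations
  have hs := sin_sq_add_cos_sq (θ t)
  have hθ2 : deriv (deriv θ) t = lam t * a / I := by
    field_simp
    linarith [heqθ t]
  have hx2 : deriv (deriv x) t = lam t * sin (θ t) / m := by
    field_simp
    linarith [heqx t]
  have hy2 : deriv (deriv y) t = -(lam t * cos (θ t)) / m := by
    field_simp
    linarith [heqy t]
  -- lam relation: lam * (I + a²m) = -I*m*θ'*(cosθ x' + sinθ y')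
  have hlam : lam t * (I + a ^ 2 * m)
      = -(I * m) * deriv θ t * (cos (θ t) * deriv x t + sin (θ t) * deriv y t) := by
    have h := hcond
    rw [hθ2, hx2, hy2] at h
    field_simp at h
    have hlam' : m * (lam t * (I + a ^ 2 * m))
        = m * (-(I * m) * deriv θ t * (cos (θ t) * deriv x t + sin (θ t) * deriv y t)) := by
      linear_combination m * h - lam t * I * m * hs
    exact mul_left_cancel₀ hm.ne' hlam'
  constructor
  · rw [hp1d, hp₁ t, hp₂ t, hθ2]
    field_simp
    linear_combination a * hlam
  · rw [hp2d, hp₁ t, hx2, hy2]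
    have hc := hcon t
    field_simp
    linear_combination (-(m * deriv θ t)) * hc
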